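/- Let r ≥ 1 and let a_1 < b_1 < a_2 < b_2 < ⋯ < a_r < b_r be real numbers. Let x_0 be a real number with a_j < x_0 < b_j for some j ∈ {1,…,r}. Then Σ_{i=1}^r (1/(x_0 − a_i) − 1/(x_0 − b_i)) > 0. -/

import Mathlib

open scoped BigOperators

lemma key_gap (p q x : ℝ) (hpq : p < q) (h : x < p ∨ q < x) :
    0 < 1 / (x - q) - 1 / (x - p) := by
  have hprod : 0 < (x - q) * (x - p) := by
    rcases h with h | h
    · exact mul_pos_of_neg_of_neg (by linarith) (by linarith)
    · exact mul_pos (by linarith) (by linarith)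
  have hq : x - q ≠ 0 := by
    rcases h with h | h <;> intro hc <;> nlinarith
  have hp : x - p ≠ 0 := by
    rcases h with h | h <;> intro hc <;> nlinarith
  rw [div_sub_div _ _ hq hp]
  apply div_pos _ hprod
  nlinarith

/-- **Positive convexity of one-dimensional positive geometries.**
For `a₁ < b₁ < a₂ < b₂ < ⋯ < a_r < b_r` and `x₀` in the interior of one of the intervals
`(a_j, b_j)`, the canonical-form density `∑ i (1/(x₀ - a i) - 1/(x₀ - b i))` is positive. -/
theorem stmt_15 (r : ℕ) (hr : 1 ≤ r) (a b : Fin r → ℝ)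
    (hab : ∀ i, a i < b i) (hba : ∀ i j : Fin r, i < j → b i < a j)
    (j : Fin r) (x₀ : ℝ) (hx₁ : a j < x₀) (hx₂ : x₀ < b j) :
    0 < ∑ i, (1 / (x₀ - a i) - 1 / (x₀ - b i)) := by
  obtain ⟨n, rfl⟩ : ∃ n, r = n + 1 := ⟨r - 1, (Nat.succ_pred_eq_of_pos hr).symm⟩
  have hsplit : ∑ i : Fin (n+1), (1 / (x₀ - a i) - 1 / (x₀ - b i)) =
      (1 / (x₀ - a 0) - 1 / (x₀ - b (Fin.last n))) +
      ∑ i : Fin n, (1 / (x₀ - a i.succ) - 1 / (x₀ - b i.castSucc)) := by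
    rw [Finset.sum_sub_distrib, Finset.sum_sub_distrib, Fin.sum_univ_succ,
      Fin.sum_univ_castSucc]
    ring
  rw [hsplit]
  -- first: a 0 < x₀
  have ha0 : a 0 < x₀ := by
    rcases (Fin.zero_le j).lt_or_eq with h | h
    · have := hba 0 j h
      have := hab 0
      linarith
    · rw [h]; exact hx₁
  -- second: x₀ < b (Fin.last n)
  have hbl : x₀ < b (Fin.last n) := by
    rcases (Fin.le_last j).lt_or_eq with h | h
    · have := hba j (Fin.last n) h
      have := hab (Fin.last n)
      linarith
    · rw [← h]; exact hx₂
  have h1 : 0 < 1 / (x₀ - a 0) := div_pos one_pos (by linarith)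
  have h2 : 1 / (x₀ - b (Fin.last n)) < 0 :=
    div_neg_of_pos_of_neg one_pos (by linarith)
  have h3 : 0 ≤ ∑ i : Fin n, (1 / (x₀ - a i.succ) - 1 / (x₀ - b i.castSucc)) := by
    apply Finset.sum_nonneg
    intro i _
    have hpq : b i.castSucc < a i.succ := hba _ _ Fin.castSucc_lt_succ
    have hor : x₀ < b i.castSucc ∨ a i.succ < x₀ := by
      rcases lt_or_ge j i.succ with h | h
      · left
        have hj : j ≤ i.castSucc := by
          have : (j : ℕ) < (i : ℕ) + 1 := h
          exact Fin.le_def.mpr (by simpa [Fin.coe_castSucc] using Nat.lt_succ_iff.mp this)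
        rcases hj.lt_or_eq with h' | h'
        · have := hba j i.castSucc h'
          have := hab i.castSucc
          linarith
        · rw [← h']; exact hx₂
      · right
        rcases h.lt_or_eq with h' | h'
        · have := hba i.succ j h'
          have := hab i.succ
          linarith
        · rw [h']; exact hx₁
    exact le_of_lt (key_gap _ _ _ hpq hor)
  linarith
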